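/- Let X_i ⊂ {0,1}^{d_i} be finite nonempty, θ ∈ ℝ^{d_i}, and A ∈ {0,1}^{K×d_i} with A x ∈ {0,1}^K for all x ∈ X_i. Let x*, x** ∈ argmin_{x ∈ X_i} ⟨θ, x⟩. Suppose Δ ∈ ℝ^K satisfies, with ν* := A x*: Δ(s) ≥ 0 when ν*(s)=1, Δ(s) ≤ 0 when ν*(s)=0, and x* ∈ argmin_{x ∈ X_i} ⟨θ + AᵀΔ, x⟩. Then, with ν** := A x**, also Δ(s) ≥ 0 when ν**(s)=1, Δ(s) ≤ 0 when ν**(s)=0, and x** ∈ argmin_{x ∈ X_i} ⟨θ + AᵀΔ, x⟩. -/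

import Mathlib

open Matrix in
/-- Multiple-minima lemma: if Δ is admissible w.r.t. one minimizer x* of ⟨θ,·⟩
over X_i, it is admissible w.r.t. any other minimizer x** as well. -/
theorem admissible_for_all_minima
    (di K : ℕ) (Xi : Finset (Fin di → ℝ)) (hXi : Xi.Nonempty)
    (hXibin : ∀ x ∈ Xi, ∀ t, x t = 0 ∨ x t = 1)
    (A : Matrix (Fin K) (Fin di) ℝ)
    (hA : ∀ x ∈ Xi, ∀ s, A.mulVec x s = 0 ∨ A.mulVec x s = 1)
    (θ : Fin di → ℝ)
    (xstar xss : Fin di → ℝ) (hxstar : xstar ∈ Xi) (hxss : xss ∈ Xi)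
    (hxstarmin : ∀ x ∈ Xi, dotProduct θ xstar ≤ dotProduct θ x)
    (hxssmin : ∀ x ∈ Xi, dotProduct θ xss ≤ dotProduct θ x)
    (Δ : Fin K → ℝ)
    (hΔ : ∀ s, (A.mulVec xstar s = 1 → 0 ≤ Δ s) ∧ (A.mulVec xstar s = 0 → Δ s ≤ 0))
    (hxstarmin' : ∀ x ∈ Xi,
      dotProduct (θ + A.transpose.mulVec Δ) xstar ≤
        dotProduct (θ + A.transpose.mulVec Δ) x) :
    (∀ s, (A.mulVec xss s = 1 → 0 ≤ Δ s) ∧ (A.mulVec xss s = 0 → Δ s ≤ 0)) ∧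
    (∀ x ∈ Xi,
      dotProduct (θ + A.transpose.mulVec Δ) xss ≤
        dotProduct (θ + A.transpose.mulVec Δ) x) := by
  have key : ∀ x : Fin di → ℝ,
      dotProduct (θ + A.transpose.mulVec Δ) x =
        dotProduct θ x + dotProduct Δ (A.mulVec x) := by
    intro x
    rw [add_dotProduct, Matrix.mulVec_transpose, Matrix.dotProduct_mulVec]
  have hθeq : dotProduct θ xstar = dotProduct θ xss :=
    le_antisymm (hxstarmin xss hxss) (hxssmin xstar hxstar)
  -- pointwise inequality Δ s * ν** s ≤ Δ s * ν* s
  have hcomp : ∀ s, Δ s * A.mulVec xss s ≤ Δ s * A.mulVec xstar s := by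
    intro s
    rcases hA xstar hxstar s with h0 | h1
    · rcases hA xss hxss s with h0' | h1'
      · rw [h0, h0']
      · rw [h0, h1', mul_zero, mul_one]
        exact (hΔ s).2 h0
    · rcases hA xss hxss s with h0' | h1'
      · rw [h1, h0', mul_zero, mul_one]
        exact (hΔ s).1 h1
      · rw [h1, h1']
  have hsumle : dotProduct Δ (A.mulVec xstar) ≤ dotProduct Δ (A.mulVec xss) := by
    have := hxstarmin' xss hxss
    rw [key, key, hθeq] at this
    linarith
  have hsumge : dotProduct Δ (A.mulVec xss) ≤ dotProduct Δ (A.mulVec xstar) :=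
    Finset.sum_le_sum fun s _ => hcomp s
  have hsumeq : dotProduct Δ (A.mulVec xss) = dotProduct Δ (A.mulVec xstar) :=
    le_antisymm hsumge hsumle
  have heach : ∀ s, Δ s * A.mulVec xss s = Δ s * A.mulVec xstar s := by
    intro s
    have := (Finset.sum_eq_sum_iff_of_le (fun i (_ : i ∈ Finset.univ) => hcomp i)).mp hsumeq
    exact this s (Finset.mem_univ s)
  constructor
  · intro s
    constructor
    · intro h1
      rcases hA xstar hxstar s with h0' | h1'
      · have := heach s
        rw [h1, h0', mul_one, mul_zero] at this
        rw [this]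
      · exact (hΔ s).1 h1'
    · intro h0
      rcases hA xstar hxstar s with h0' | h1'
      · exact (hΔ s).2 h0'
      · have := heach s
        rw [h0, h1', mul_one, mul_zero] at this
        rw [← this]
  · intro x hx
    have h1 := hxstarmin' x hx
    rw [key, key] at h1 ⊢
    linarith [hθeq, hsumeq]
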